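/- Let G(x) = A_0 + x_1 A_1 + ... + x_n A_n with A_0,...,A_n q×q symmetric real matrices, K = {x ∈ ℝ^n : G(x) ⪰ 0}, and let H(G) ⊆ ℝ[x_1,...,x_n] be the set of all polynomials of the form λ_0 + Σ_{k=1}^m ⟨Λ_k, G(x)^{⊗k}⟩ where m ∈ ℕ, λ_0 ≥ 0 is a real number, and each Λ_k is a q^k × q^k positive semidefinite real matrix. If K is compact with nonempty interior, then every polynomial h ∈ ℝ[x_1,...,x_n] can be written as h = h_1 − h_2 with h_1, h_2 ∈ H(G); that is, ℝ[x_1,...,x_n] = H(G) − H(G). -/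

import Mathlib

open scoped BigOperators
open scoped Pointwise

noncomputable section

/-- The `k`-fold Kronecker power of a matrix, with rows and columns indexed by
functions `Fin k → ι` (a type of cardinality `(#ι)^k`):
`(M^{⊗k})_{a,b} = ∏ᵢ M_{a i, b i}`. -/
def kronPow {ι : Type*} {R : Type*} [CommMonoid R] (M : Matrix ι ι R) (k : ℕ) :
    Matrix (Fin k → ι) (Fin k → ι) R :=
  Matrix.of fun a b => ∏ i, M (a i) (b i)

/-- Trace inner product `⟨Λ, B⟩ = tr(Λᵀ B) = ∑ᵢⱼ Λᵢⱼ Bᵢⱼ` of a real matrix against a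
polynomial matrix. -/
def tipP {n : ℕ} {ι : Type*} [Fintype ι] (Λ : Matrix ι ι ℝ)
    (B : Matrix ι ι (MvPolynomial (Fin n) ℝ)) : MvPolynomial (Fin n) ℝ :=
  ∑ i, ∑ j, MvPolynomial.C (Λ i j) * B i j

/-- The cone `H(G)` of all polynomials of the form
`λ₀ + ∑_{k=1}^m ⟨Λ_k, G(x)^{⊗k}⟩` with `λ₀ ≥ 0` and each `Λ_k` positive semidefinite. -/
def Hset {n : ℕ} {ι : Type*} [Fintype ι]
    (G : Matrix ι ι (MvPolynomial (Fin n) ℝ)) : Set (MvPolynomial (Fin n) ℝ) :=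
  { p | ∃ (m : ℕ) (lam0 : ℝ) (Λ : (k : ℕ) → Matrix (Fin k → ι) (Fin k → ι) ℝ),
      0 ≤ lam0 ∧ (∀ k ∈ Finset.Icc 1 m, (Λ k).PosSemidef) ∧
      p = MvPolynomial.C lam0 + ∑ k ∈ Finset.Icc 1 m, tipP (Λ k) (kronPow G k) }

/-- The linear polynomial matrix `G(x) = A₀ + ∑ₗ xₗ Aₗ`. -/
def linMat {n q : ℕ} (A0 : Matrix (Fin q) (Fin q) ℝ)
    (A : Fin n → Matrix (Fin q) (Fin q) ℝ) :
    Matrix (Fin q) (Fin q) (MvPolynomial (Fin n) ℝ) :=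
  Matrix.of fun i j =>
    MvPolynomial.C (A0 i j) + ∑ l, MvPolynomial.X l * MvPolynomial.C (A l i j)

/-- Entrywise evaluation of a polynomial matrix at a point `x`. -/
def evalMat {n : ℕ} {ι : Type*} (x : Fin n → ℝ)
    (B : Matrix ι ι (MvPolynomial (Fin n) ℝ)) : Matrix ι ι ℝ :=
  Matrix.of fun i j => MvPolynomial.eval x (B i j)

/-! ### Auxiliary lemmas -/

section Aux

lemma aux_psd_smul_one {m : Type*} [Fintype m] [DecidableEq m] {c : ℝ} (hc : 0 ≤ c) :
    (c • (1 : Matrix m m ℝ)).PosSemidef := by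
  rw [Matrix.posSemidef_iff_dotProduct_mulVec]
  constructor
  · unfold Matrix.IsHermitian
    simp [Matrix.conjTranspose_smul]
  · intro x
    simp only [Matrix.smul_mulVec, Matrix.one_mulVec, dotProduct_smul]
    have : 0 ≤ dotProduct (star x) x := dotProduct_star_self_nonneg x
    positivity

lemma aux_psd_smul {m : Type*} [Fintype m] {P : Matrix m m ℝ} (hP : P.PosSemidef)
    {r : ℝ} (hr : 0 ≤ r) : (r • P).PosSemidef := by
  rw [Matrix.posSemidef_iff_dotProduct_mulVec]
  constructor
  · show Matrix.conjTranspose (r • P) = r • P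
    rw [Matrix.conjTranspose_smul, hP.1]
    simp
  · intro x
    rw [Matrix.smul_mulVec, dotProduct_smul, smul_eq_mul]
    exact mul_nonneg hr (hP.dotProduct_mulVec_nonneg x)

/-- Any symmetric real matrix is a difference of two PSD matrices. -/
lemma aux_psd_decomp {m : Type*} [Fintype m] [DecidableEq m] (M : Matrix m m ℝ)
    (hM : ∀ i j, M i j = M j i) :
    ∃ P Q : Matrix m m ℝ, P.PosSemidef ∧ Q.PosSemidef ∧ M = P - Q := by
  set c : ℝ := ∑ i, ∑ j, |M i j| with hc
  have hc0 : 0 ≤ c := Finset.sum_nonneg fun i _ => Finset.sum_nonneg fun j _ => abs_nonneg _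
  refine ⟨M + c • 1, c • 1, ?_, aux_psd_smul_one hc0, by abel⟩
  rw [Matrix.posSemidef_iff_dotProduct_mulVec]
  constructor
  · unfold Matrix.IsHermitian
    ext i j
    simp only [Matrix.conjTranspose_apply, Matrix.add_apply, Matrix.smul_apply,
      Matrix.one_apply, star_trivial]
    rw [hM j i]
    by_cases h : j = i
    · simp [h]
    · rw [if_neg h, if_neg (fun h' => h h'.symm)]
  · intro x
    simp only [Matrix.add_mulVec, dotProduct_add, Matrix.smul_mulVec,
      Matrix.one_mulVec, dotProduct_smul]
    have hS : dotProduct (star x) x = ∑ t, x t ^ 2 := by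
      simp [dotProduct, sq]
    set S : ℝ := ∑ t, x t ^ 2 with hSdef
    have hS0 : 0 ≤ S := Finset.sum_nonneg fun t _ => sq_nonneg _
    have hSt : ∀ t, x t ^ 2 ≤ S := fun t =>
      Finset.single_le_sum (fun r _ => sq_nonneg (x r)) (Finset.mem_univ t)
    have hmain : -(c * S) ≤ dotProduct (star x) (M.mulVec x) := by
      have hq : dotProduct (star x) (M.mulVec x) = ∑ i, ∑ j, x i * (M i j * x j) := by
        simp [dotProduct, Matrix.mulVec, Finset.mul_sum]
      have hcs : -(c * S) = ∑ i, ∑ j, -(|M i j| * S) := by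
        rw [hc, Finset.sum_mul]
        simp [Finset.sum_mul, Finset.sum_neg_distrib]
      rw [hq, hcs]
      refine Finset.sum_le_sum fun i _ => Finset.sum_le_sum fun j _ => ?_
      have h1 := hSt i
      have h2 := hSt j
      have h3 := le_abs_self (M i j)
      have h4 := neg_abs_le (M i j)
      nlinarith [mul_nonneg (sub_nonneg.2 h3) (sq_nonneg (x i + x j)),
        mul_nonneg (sub_nonneg.2 (neg_le.1 h4)) (sq_nonneg (x i - x j)),
        mul_nonneg (abs_nonneg (M i j)) (sub_nonneg.2 h1),
        mul_nonneg (abs_nonneg (M i j)) (sub_nonneg.2 h2)]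
    rw [hS, smul_eq_mul]
    linarith

variable {n : ℕ} {ι : Type*} [Fintype ι] [DecidableEq ι]

lemma tipP_zero (B : Matrix ι ι (MvPolynomial (Fin n) ℝ)) : tipP 0 B = 0 := by
  simp [tipP]

lemma tipP_add (Λ Λ' : Matrix ι ι ℝ) (B : Matrix ι ι (MvPolynomial (Fin n) ℝ)) :
    tipP (Λ + Λ') B = tipP Λ B + tipP Λ' B := by
  simp [tipP, add_mul, Finset.sum_add_distrib]

lemma tipP_sub (Λ Λ' : Matrix ι ι ℝ) (B : Matrix ι ι (MvPolynomial (Fin n) ℝ)) :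
    tipP (Λ - Λ') B = tipP Λ B - tipP Λ' B := by
  simp [tipP, sub_mul, Finset.sum_sub_distrib]

lemma tipP_smul (r : ℝ) (Λ : Matrix ι ι ℝ) (B : Matrix ι ι (MvPolynomial (Fin n) ℝ)) :
    tipP (r • Λ) B = MvPolynomial.C r * tipP Λ B := by
  simp [tipP, Finset.mul_sum, mul_assoc]

lemma tipP_basis (a b : ι) (r : ℝ) (B : Matrix ι ι (MvPolynomial (Fin n) ℝ)) :
    tipP (Matrix.single a b r) B = MvPolynomial.C r * B a b := by
  unfold tipP
  rw [Finset.sum_eq_single a]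
  · rw [Finset.sum_eq_single b]
    · simp [Matrix.single]
    · intro j _ hj; simp [Matrix.single, hj.symm]
    · simp
  · intro i _ hi
    apply Finset.sum_eq_zero
    intro j _
    simp [Matrix.single, hi.symm]
  · simp

lemma tipP_sym_basis (a b : ι) (B : Matrix ι ι (MvPolynomial (Fin n) ℝ))
    (hB : B a b = B b a) :
    tipP (Matrix.single a b (1/2) + Matrix.single b a (1/2)) B
      = B a b := by
  rw [tipP_add, tipP_basis, tipP_basis, ← hB, ← add_mul, ← map_add]
  norm_num

lemma sym_basis_symm (a b : ι) : ∀ i j : ι,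
    (Matrix.single a b (1/2 : ℝ) + Matrix.single b a (1/2) : Matrix ι ι ℝ) i j
      = (Matrix.single a b (1/2 : ℝ) + Matrix.single b a (1/2) : Matrix ι ι ℝ) j i := by
  intro i j
  simp only [Matrix.add_apply, Matrix.single, Matrix.of_apply]
  rw [add_comm]
  congr 1 <;> · congr 1
                simp only [eq_iff_iff]
                constructor <;> (rintro ⟨h1, h2⟩; exact ⟨h2, h1⟩)

/-- Padding a sum of `tipP`s up to a larger range. -/
lemma tipP_pad_sum (G : Matrix ι ι (MvPolynomial (Fin n) ℝ)) (m M : ℕ) (h : m ≤ M)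
    (Λ : (k : ℕ) → Matrix (Fin k → ι) (Fin k → ι) ℝ) :
    ∑ k ∈ Finset.Icc 1 M, tipP (if k ≤ m then Λ k else 0) (kronPow G k)
      = ∑ k ∈ Finset.Icc 1 m, tipP (Λ k) (kronPow G k) := by
  rw [← Finset.sum_subset (Finset.Icc_subset_Icc_right h)]
  · exact Finset.sum_congr rfl fun k hk => by rw [if_pos (Finset.mem_Icc.1 hk).2]
  · intro k hk hk'
    have hnk : ¬ k ≤ m := fun hle => hk' (Finset.mem_Icc.2 ⟨(Finset.mem_Icc.1 hk).1, hle⟩)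
    rw [if_neg hnk, tipP_zero]

lemma Hset_const (G : Matrix ι ι (MvPolynomial (Fin n) ℝ)) {a : ℝ} (ha : 0 ≤ a) :
    MvPolynomial.C a ∈ Hset G := by
  refine ⟨0, a, fun _ => 0, ha, by simp, by simp⟩

lemma Hset_add (G : Matrix ι ι (MvPolynomial (Fin n) ℝ)) {p p' : MvPolynomial (Fin n) ℝ}
    (hp : p ∈ Hset G) (hp' : p' ∈ Hset G) : p + p' ∈ Hset G := by
  obtain ⟨m, l0, Λ, hl0, hPSD, rfl⟩ := hp
  obtain ⟨m', l0', Λ', hl0', hPSD', rfl⟩ := hp'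
  refine ⟨max m m', l0 + l0',
    fun k => (if k ≤ m then Λ k else 0) + (if k ≤ m' then Λ' k else 0),
    add_nonneg hl0 hl0', ?_, ?_⟩
  · intro k hk
    have hk1 : 1 ≤ k := (Finset.mem_Icc.1 hk).1
    refine Matrix.PosSemidef.add ?_ ?_
    · by_cases h : k ≤ m
      · rw [if_pos h]; exact hPSD k (Finset.mem_Icc.2 ⟨hk1, h⟩)
      · rw [if_neg h]; exact Matrix.PosSemidef.zero
    · by_cases h : k ≤ m'
      · rw [if_pos h]; exact hPSD' k (Finset.mem_Icc.2 ⟨hk1, h⟩)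
      · rw [if_neg h]; exact Matrix.PosSemidef.zero
  · simp only [map_add, tipP_add, Finset.sum_add_distrib]
    rw [tipP_pad_sum G m (max m m') (le_max_left _ _) Λ,
      tipP_pad_sum G m' (max m m') (le_max_right _ _) Λ']
    ring

lemma Hset_smul (G : Matrix ι ι (MvPolynomial (Fin n) ℝ)) {p : MvPolynomial (Fin n) ℝ}
    {r : ℝ} (hr : 0 ≤ r) (hp : p ∈ Hset G) : r • p ∈ Hset G := by
  obtain ⟨m, l0, Λ, hl0, hPSD, rfl⟩ := hp
  refine ⟨m, r * l0, fun k => r • Λ k, mul_nonneg hr hl0,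
    fun k hk => aux_psd_smul (hPSD k hk) hr, ?_⟩
  simp [MvPolynomial.smul_eq_C_mul, mul_add, Finset.mul_sum, tipP_smul, map_mul]

/-- A `tipP` of a PSD matrix against a Kronecker power (level `k ≥ 1`) lies in `Hset G`. -/
lemma tipP_mem_Hset (G : Matrix ι ι (MvPolynomial (Fin n) ℝ)) (k : ℕ) (hk : 1 ≤ k)
    (P : Matrix (Fin k → ι) (Fin k → ι) ℝ) (hP : P.PosSemidef) :
    tipP P (kronPow G k) ∈ Hset G := by
  classical
  refine ⟨k, 0, fun j => if h : j = k then h ▸ P else 0, le_refl 0, ?_, ?_⟩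
  · intro j _
    by_cases h : j = k
    · subst h; simpa using hP
    · simp [h, Matrix.PosSemidef.zero]
  · rw [Finset.sum_eq_single k]
    · simp
    · intro j _ hj
      simp [hj, tipP_zero]
    · intro hk'
      exact absurd (Finset.mem_Icc.2 ⟨hk, le_refl k⟩) hk'

/-- The difference cone `Hset G - Hset G` as a submodule. -/
def Dmod (G : Matrix ι ι (MvPolynomial (Fin n) ℝ)) :
    Submodule ℝ (MvPolynomial (Fin n) ℝ) where
  carrier := {p | ∃ h1 ∈ Hset G, ∃ h2 ∈ Hset G, p = h1 - h2}
  zero_mem' := ⟨MvPolynomial.C 0, Hset_const G le_rfl, MvPolynomial.C 0,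
    Hset_const G le_rfl, by simp⟩
  add_mem' := by
    rintro p p' ⟨a, ha, b, hb, rfl⟩ ⟨a', ha', b', hb', rfl⟩
    exact ⟨a + a', Hset_add G ha ha', b + b', Hset_add G hb hb', by ring⟩
  smul_mem' := by
    rintro r p ⟨a, ha, b, hb, rfl⟩
    rcases le_or_gt 0 r with hr | hr
    · exact ⟨r • a, Hset_smul G hr ha, r • b, Hset_smul G hr hb, by rw [smul_sub]⟩
    · refine ⟨(-r) • b, Hset_smul G (by linarith) hb,
        (-r) • a, Hset_smul G (by linarith) ha, by module⟩

end Aux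

/-- If `K = {x : G(x) := A₀ + ∑ xₗ Aₗ ⪰ 0}` is compact with nonempty interior, then every
polynomial is a difference of two elements of `H(G)`, i.e. `ℝ[x] = H(G) − H(G)`. -/
theorem Hset_sub_Hset_eq_all {n q : ℕ}
    (A0 : Matrix (Fin q) (Fin q) ℝ) (A : Fin n → Matrix (Fin q) (Fin q) ℝ)
    (hA0 : A0.IsSymm) (hA : ∀ l, (A l).IsSymm)
    (K : Set (Fin n → ℝ))
    (hK : K = {x | (evalMat x (linMat A0 A)).PosSemidef})
    (hcomp : IsCompact K)
    (hint : (interior K).Nonempty) :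
    ∀ h : MvPolynomial (Fin n) ℝ,
      ∃ h1 ∈ Hset (linMat A0 A), ∃ h2 ∈ Hset (linMat A0 A), h = h1 - h2 := by
  classical
  set G := linMat A0 A with hG
  -- symmetry of G
  have hGsym : ∀ i j, G i j = G j i := by
    intro i j
    have h0 : A0 i j = A0 j i := by
      conv_lhs => rw [← hA0]
      rfl
    have hl : ∀ l, A l i j = A l j i := by
      intro l
      conv_lhs => rw [← hA l]
      rfl
    simp only [hG, linMat, Matrix.of_apply, h0]
    congr 1
    exact Finset.sum_congr rfl fun l _ => by rw [hl l]
  have hKron : ∀ (k : ℕ) (a b : Fin k → Fin q), kronPow G k a b = kronPow G k b a := by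
    intro k a b
    unfold kronPow
    simp only [Matrix.of_apply]
    exact Finset.prod_congr rfl fun t _ => hGsym _ _
  -- the generating set of products of entries of G
  set Gen : Set (MvPolynomial (Fin n) ℝ) :=
    {p | ∃ (k : ℕ) (a b : Fin k → Fin q), p = ∏ t, G (a t) (b t)} with hGen
  -- Gen ⊆ Dmod
  have hGenD : Gen ⊆ (Dmod G : Set (MvPolynomial (Fin n) ℝ)) := by
    rintro p ⟨k, a, b, rfl⟩
    rcases Nat.eq_zero_or_pos k with hk0 | hk1
    · subst hk0
      refine ⟨MvPolynomial.C 1, Hset_const G zero_le_one, MvPolynomial.C 0,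
        Hset_const G le_rfl, by simp⟩
    · have hpeq : (∏ t, G (a t) (b t)) = kronPow G k a b := rfl
      obtain ⟨P, Q, hP, hQ, hPQ⟩ := aux_psd_decomp
        (Matrix.single a b (1/2 : ℝ) + Matrix.single b a (1/2))
        (sym_basis_symm a b)
      refine ⟨tipP P (kronPow G k), tipP_mem_Hset G k hk1 P hP,
        tipP Q (kronPow G k), tipP_mem_Hset G k hk1 Q hQ, ?_⟩
      rw [hpeq, ← tipP_sym_basis a b (kronPow G k) (hKron k a b), hPQ, tipP_sub]
  -- span of Gen is closed under multiplication
  have hGenMul : Gen * Gen ⊆ Gen := by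
    rintro p ⟨x, hx, y, hy, rfl⟩
    obtain ⟨k, a, b, rfl⟩ := hx
    obtain ⟨k', a', b', rfl⟩ := hy
    refine ⟨k + k', Fin.append a a', Fin.append b b', ?_⟩
    rw [Fin.prod_univ_add]
    congr 1
    · exact Finset.prod_congr rfl fun t _ => by rw [Fin.append_left, Fin.append_left]
    · exact Finset.prod_congr rfl fun t _ => by rw [Fin.append_right, Fin.append_right]
  have hmul : ∀ x ∈ Submodule.span ℝ Gen, ∀ y ∈ Submodule.span ℝ Gen,
      x * y ∈ Submodule.span ℝ Gen := by
    intro x hx y hy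
    have h1 : x * y ∈ Submodule.span ℝ Gen * Submodule.span ℝ Gen :=
      Submodule.mul_mem_mul hx hy
    rw [Submodule.span_mul_span] at h1
    exact Submodule.span_mono hGenMul h1
  -- 1 and constants in span Gen
  have hone : (1 : MvPolynomial (Fin n) ℝ) ∈ Submodule.span ℝ Gen :=
    Submodule.subset_span ⟨0, Fin.elim0, Fin.elim0, by simp⟩
  have hCmem : ∀ a : ℝ, MvPolynomial.C a ∈ Submodule.span ℝ Gen := by
    intro a
    have : MvPolynomial.C a = a • (1 : MvPolynomial (Fin n) ℝ) := by
      rw [MvPolynomial.smul_eq_C_mul, mul_one]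
    rw [this]
    exact Submodule.smul_mem _ _ hone
  -- entries of G in span Gen
  have hGij : ∀ i j, G i j ∈ Submodule.span ℝ Gen := by
    intro i j
    exact Submodule.subset_span ⟨1, fun _ => i, fun _ => j, by simp⟩
  -- the key linear-algebra step: each variable X m lies in span Gen
  have hX : ∀ m : Fin n, MvPolynomial.X m ∈ Submodule.span ℝ Gen := by
    intro m
    -- vectors v (i,j) = (A l i j)_l in Euclidean space
    set v : Fin q × Fin q → EuclideanSpace ℝ (Fin n) :=
      fun ij => WithLp.toLp 2 (fun l => A l ij.1 ij.2) with hv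
    have hVtop : Submodule.span ℝ (Set.range v) = ⊤ := by
      rw [← Submodule.orthogonal_eq_bot_iff]
      rw [Submodule.eq_bot_iff]
      intro d hd
      by_contra hd0
      obtain ⟨x0, hx0i⟩ := hint
      have hx0K : x0 ∈ K := interior_subset hx0i
      have hdinner : ∀ i j, ∑ l, A l i j * d l = 0 := by
        intro i j
        have hm := (Submodule.mem_orthogonal _ _).1 hd (v (i, j))
          (Submodule.subset_span ⟨(i, j), rfl⟩)
        simpa [PiLp.inner_apply, RCLike.inner_apply, starRingEnd_apply, hv, mul_comm] using hm
      -- K is invariant under translation by d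
      have hK2 : ∀ t : ℝ, (fun l => x0 l + t * d l) ∈ K := by
        intro t
        have heval : evalMat (fun l => x0 l + t * d l) (linMat A0 A)
            = evalMat x0 (linMat A0 A) := by
          ext i j
          simp only [evalMat, linMat, Matrix.of_apply, map_add, MvPolynomial.eval_C,
            map_sum, map_mul, MvPolynomial.eval_X]
          have : ∑ l, (x0 l + t * d l) * A l i j
              = (∑ l, x0 l * A l i j) + t * ∑ l, A l i j * d l := by
            rw [Finset.mul_sum, ← Finset.sum_add_distrib]
            exact Finset.sum_congr rfl fun l _ => by ring
          rw [this, hdinner i j]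
          ring
        rw [hK]
        show (evalMat (fun l => x0 l + t * d l) (linMat A0 A)).PosSemidef
        rw [heval]
        have := hK ▸ hx0K
        exact this
      obtain ⟨R, hR⟩ := hcomp.isBounded.exists_norm_le
      obtain ⟨mI, hmI⟩ : ∃ mI, d mI ≠ 0 := by
        by_contra hall
        push_neg at hall
        exact hd0 (by ext l; exact hall l)
      set t : ℝ := (R + ‖x0‖ + 1) / |d mI| with ht
      have hx0R : ‖x0‖ ≤ R := hR x0 hx0K
      have hx0n : (0:ℝ) ≤ ‖x0‖ := norm_nonneg _
      have habs : 0 < |d mI| := abs_pos.2 hmI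
      have ht0 : 0 ≤ t := div_nonneg (by linarith) habs.le
      have hcancel : t * |d mI| = R + ‖x0‖ + 1 := div_mul_cancel₀ _ habs.ne'
      have h1 : ‖(fun l => x0 l + t * d l : Fin n → ℝ)‖ ≤ R := hR _ (hK2 t)
      have h2 : |x0 mI + t * d mI| ≤ R := by
        have := norm_le_pi_norm (fun l => x0 l + t * d l : Fin n → ℝ) mI
        rw [Real.norm_eq_abs] at this
        exact this.trans h1
      have h3 : |x0 mI| ≤ ‖x0‖ := by
        have := norm_le_pi_norm x0 mI
        rwa [Real.norm_eq_abs] at this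
      have h4 : t * |d mI| ≤ |x0 mI + t * d mI| + |x0 mI| := by
        have : t * d mI = (x0 mI + t * d mI) - x0 mI := by ring
        calc t * |d mI| = |t * d mI| := by rw [abs_mul, abs_of_nonneg ht0]
          _ = |(x0 mI + t * d mI) - x0 mI| := by rw [← this]
          _ ≤ |x0 mI + t * d mI| + |x0 mI| := abs_sub _ _
      linarith
    -- transfer to polynomials
    have hsingle : (EuclideanSpace.single m (1:ℝ)) ∈ Submodule.span ℝ (Set.range v) := by
      rw [hVtop]; trivial
    have hmapped : ∀ (u : EuclideanSpace ℝ (Fin n)), u ∈ Submodule.span ℝ (Set.range v) →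
        (∑ l, MvPolynomial.C (u l) * MvPolynomial.X l) ∈ Submodule.span ℝ Gen := by
      intro u hu
      induction hu using Submodule.span_induction with
      | mem x hx =>
        obtain ⟨⟨i, j⟩, rfl⟩ := hx
        have heq : (∑ l, MvPolynomial.C ((v (i,j)) l) * MvPolynomial.X l)
            = G i j - MvPolynomial.C (A0 i j) := by
          simp only [hG, linMat, Matrix.of_apply, hv]
          rw [add_sub_cancel_left]
          exact Finset.sum_congr rfl fun l _ => mul_comm _ _
        rw [heq]
        exact Submodule.sub_mem _ (hGij i j) (hCmem _)
      | zero => simp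
      | add x y hx hy ihx ihy =>
        have : (∑ l, MvPolynomial.C ((x + y) l) * MvPolynomial.X l)
            = (∑ l, MvPolynomial.C (x l) * MvPolynomial.X l)
              + ∑ l, MvPolynomial.C (y l) * MvPolynomial.X l := by
          rw [← Finset.sum_add_distrib]
          refine Finset.sum_congr rfl fun l _ => ?_
          have : (x + y) l = x l + y l := rfl
          rw [this, map_add, add_mul]
        rw [this]
        exact Submodule.add_mem _ ihx ihy
      | smul r x hx ihx =>
        have : (∑ l, MvPolynomial.C ((r • x) l) * MvPolynomial.X l)
            = r • ∑ l, MvPolynomial.C (x l) * MvPolynomial.X l := by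
          rw [MvPolynomial.smul_eq_C_mul, Finset.mul_sum]
          refine Finset.sum_congr rfl fun l _ => ?_
          have : (r • x) l = r * x l := rfl
          rw [this, map_mul, mul_assoc]
        rw [this]
        exact Submodule.smul_mem _ _ ihx
    have hXm := hmapped _ hsingle
    have heq : (∑ l, MvPolynomial.C ((EuclideanSpace.single m (1:ℝ)) l) * MvPolynomial.X l)
        = MvPolynomial.X m := by
      rw [Finset.sum_eq_single m]
      · simp [EuclideanSpace.single_apply]
      · intro l _ hl
        simp [EuclideanSpace.single_apply, hl]
      · simp
    rwa [heq] at hXm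
  -- span Gen is everything
  have hspan_top : ∀ p : MvPolynomial (Fin n) ℝ, p ∈ Submodule.span ℝ Gen := by
    intro p
    induction p using MvPolynomial.induction_on with
    | C a => exact hCmem a
    | add p q hp hq => exact Submodule.add_mem _ hp hq
    | mul_X p m hp => exact hmul _ hp _ (hX m)
  -- conclude
  intro h
  have hD : h ∈ (Dmod G : Set (MvPolynomial (Fin n) ℝ)) :=
    Submodule.span_le.2 hGenD (hspan_top h)
  exact hD

end
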